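/- Let κ be a field, let p : Fin n → ℝ≥0 and q : Fin m → ℝ≥0 be degree vectors, and let A be a (q,p)-admissible m×n matrix over κ[ℝ₊]. Then there exist an invertible m×m matrix B over κ[ℝ₊] that is (q,q)-admissible and an invertible n×n matrix C over κ[ℝ₊] that is (p,p)-admissible such that the product B * A * C has at most one nonzero entry in each row and at most one nonzero entry in each column. -/

import Mathlib

open scoped NNReal

noncomputable section

/-- The ring `κ[ℝ₊]` of polynomials with coefficients in `κ` and exponents in `ℝ≥0`,
realized as the monoid algebra of the additive monoid `ℝ≥0` over `κ`. -/
abbrev PersRing (κ : Type) [Field κ] : Type := AddMonoidAlgebra κ ℝ≥0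

/-- An `m × n` matrix over `κ[ℝ₊]` is `(q, p)`-admissible if every entry `A i j` is either `0`
or a nonzero scalar multiple of the monomial `T ^ (p j - q i)` with `q i ≤ p j`.  These are
exactly the matrices of `ℝ₊`-graded homomorphisms between graded free finitely generated
`κ[ℝ₊]`-modules with homogeneous bases of degrees `p` and `q`. -/
def IsAdmissible {κ : Type} [Field κ] {m n : ℕ} (q : Fin m → ℝ≥0) (p : Fin n → ℝ≥0)
    (A : Matrix (Fin m) (Fin n) (PersRing κ)) : Prop :=
  ∀ i j, A i j = 0 ∨ (q i ≤ p j ∧ ∃ c : κ, c ≠ 0 ∧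
    A i j = c • AddMonoidAlgebra.single (p j - q i) (1 : κ))

namespace NormalFormAux
open AddMonoidAlgebra Matrix
variable {κ : Type} [Field κ] {m n k : ℕ}

lemma smul_single_one (c : κ) (t : ℝ≥0) :
    c • (AddMonoidAlgebra.single t (1:κ) : PersRing κ) = AddMonoidAlgebra.single t c := by
  rw [AddMonoidAlgebra.smul_single', mul_one]

lemma one_eq_single : (1 : PersRing κ) = AddMonoidAlgebra.single 0 1 :=
  AddMonoidAlgebra.one_def

def rowOp (i0 : Fin m) (u : Fin m → PersRing κ) : Matrix (Fin m) (Fin m) (PersRing κ) :=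
  Matrix.of fun i j => (if i = j then 1 else 0) + (if j = i0 then u i else 0)

lemma rowOp_mul (i0 : Fin m) (u : Fin m → PersRing κ) (A : Matrix (Fin m) (Fin n) (PersRing κ)) :
    rowOp i0 u * A = Matrix.of fun i j => A i j + u i * A i0 j := by
  ext i j
  simp [rowOp, Matrix.mul_apply, add_mul, Finset.sum_add_distrib, ite_mul,
    Finset.sum_ite_eq, Finset.sum_ite_eq']

lemma rowOp_mul_neg (i0 : Fin m) (u : Fin m → PersRing κ) (h0 : u i0 = 0) :
    rowOp i0 u * rowOp i0 (fun i => -u i) = 1 := by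
  rw [rowOp_mul]
  ext i j
  simp only [Matrix.of_apply, rowOp, Matrix.one_apply]
  by_cases hj : j = i0
  · by_cases hi : i = i0
    · simp [hi, hj, h0]
    · simp [hi, hj, h0]
  · have hj' : ¬ i0 = j := fun h => hj h.symm
    simp [hj, hj']

lemma rowOp_isUnit (i0 : Fin m) (u : Fin m → PersRing κ) (h0 : u i0 = 0) :
    IsUnit (rowOp i0 u) := by
  refine ⟨⟨rowOp i0 u, rowOp i0 (fun i => -u i), rowOp_mul_neg i0 u h0, ?_⟩, rfl⟩
  have := rowOp_mul_neg i0 (fun i => -u i) (by simp [h0])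
  simpa using this

lemma rowOp_adm (q : Fin m → ℝ≥0) (i0 : Fin m) (u : Fin m → PersRing κ)
    (h0 : u i0 = 0)
    (hu : ∀ i, u i = 0 ∨ (q i ≤ q i0 ∧ ∃ c : κ, c ≠ 0 ∧
      u i = c • AddMonoidAlgebra.single (q i0 - q i) (1 : κ))) :
    IsAdmissible q q (rowOp i0 u) := by
  intro i j
  by_cases hij : i = j
  · right
    refine ⟨hij ▸ le_rfl, 1, one_ne_zero, ?_⟩
    have : rowOp i0 u i j = 1 := by
      by_cases hj : j = i0
      · simp [rowOp, hij, hj, h0]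
      · simp [rowOp, hij, hj]
    rw [this, smul_single_one, hij, tsub_self, one_eq_single]
  · by_cases hj : j = i0
    · have hii0 : ¬ i = i0 := fun h => hij (h.trans hj.symm)
      rcases hu i with h | ⟨h1, c, hc, e⟩
      · left; simp [rowOp, hij, hj, h, hii0]
      · right
        refine ⟨hj ▸ h1, c, hc, ?_⟩
        simp [rowOp, hij, hj, e, hii0]
    · left; simp [rowOp, hij, hj]

def colOp (j0 : Fin n) (v : Fin n → PersRing κ) : Matrix (Fin n) (Fin n) (PersRing κ) :=
  Matrix.of fun j l => (if j = l then 1 else 0) + (if j = j0 then v l else 0)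

lemma mul_colOp (j0 : Fin n) (v : Fin n → PersRing κ) (A : Matrix (Fin m) (Fin n) (PersRing κ)) :
    A * colOp j0 v = Matrix.of fun i l => A i l + A i j0 * v l := by
  ext i l
  simp [colOp, Matrix.mul_apply, mul_add, Finset.mul_sum, mul_ite, Finset.sum_add_distrib,
    Finset.sum_ite_eq, Finset.sum_ite_eq']

lemma colOp_mul_neg (j0 : Fin n) (v : Fin n → PersRing κ) (h0 : v j0 = 0) :
    colOp j0 v * colOp j0 (fun l => -v l) = 1 := by
  rw [mul_colOp]
  ext j l
  simp only [Matrix.of_apply, colOp, Matrix.one_apply]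
  by_cases hj : j = j0
  · by_cases hl : l = j0
    · simp [hj, hl, h0]
    · have hl' : ¬ j0 = l := fun h => hl h.symm
      simp [hj, hl, hl', h0]
  · simp [hj]

lemma colOp_isUnit (j0 : Fin n) (v : Fin n → PersRing κ) (h0 : v j0 = 0) :
    IsUnit (colOp j0 v) := by
  refine ⟨⟨colOp j0 v, colOp j0 (fun l => -v l), colOp_mul_neg j0 v h0, ?_⟩, rfl⟩
  have := colOp_mul_neg j0 (fun l => -v l) (by simp [h0])
  simpa using this

lemma colOp_adm (p : Fin n → ℝ≥0) (j0 : Fin n) (v : Fin n → PersRing κ)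
    (h0 : v j0 = 0)
    (hv : ∀ l, v l = 0 ∨ (p j0 ≤ p l ∧ ∃ c : κ, c ≠ 0 ∧
      v l = c • AddMonoidAlgebra.single (p l - p j0) (1 : κ))) :
    IsAdmissible p p (colOp j0 v) := by
  intro j l
  by_cases hjl : j = l
  · right
    refine ⟨hjl ▸ le_rfl, 1, one_ne_zero, ?_⟩
    have : colOp j0 v j l = 1 := by
      by_cases hj : j = j0
      · have hl0 : l = j0 := hjl.symm.trans hj
        simp [colOp, hjl, hj, hl0, h0]
      · have hl0 : ¬ l = j0 := fun h => hj (hjl.trans h)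
        simp [colOp, hjl, hj, hl0]
    rw [this, smul_single_one, hjl, tsub_self, one_eq_single]
  · by_cases hj : j = j0
    · have hj0l : ¬ j0 = l := fun h => hjl (hj.trans h)
      rcases hv l with h | ⟨h1, c, hc, e⟩
      · left; simp [colOp, hjl, hj, h, hj0l]
      · right
        refine ⟨hj ▸ h1, c, hc, ?_⟩
        simp [colOp, hjl, hj, e, hj0l]
    · left; simp [colOp, hjl, hj]

lemma adm_one (q : Fin m → ℝ≥0) : IsAdmissible (κ := κ) q q 1 := by
  intro i j
  by_cases h : i = j
  · right
    refine ⟨h ▸ le_rfl, 1, one_ne_zero, ?_⟩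
    rw [smul_single_one, h, tsub_self, ← one_eq_single, Matrix.one_apply_eq]
  · left; rw [Matrix.one_apply_ne h]

lemma adm_mul {q : Fin m → ℝ≥0} {r : Fin k → ℝ≥0} {p : Fin n → ℝ≥0}
    {B : Matrix (Fin m) (Fin k) (PersRing κ)} {A : Matrix (Fin k) (Fin n) (PersRing κ)}
    (hB : IsAdmissible q r B) (hA : IsAdmissible r p A) : IsAdmissible q p (B * A) := by
  intro i j
  have key : ∀ x : Fin k, ∃ c : κ,
      B i x * A x j = AddMonoidAlgebra.single (p j - q i) c ∧ (c ≠ 0 → q i ≤ p j) := by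
    intro x
    rcases hB i x with h | ⟨h1, c1, hc1, e1⟩
    · exact ⟨0, by simp [h], fun h => absurd rfl h⟩
    rcases hA x j with h | ⟨h2, c2, hc2, e2⟩
    · exact ⟨0, by simp [h], fun h => absurd rfl h⟩
    refine ⟨c1 * c2, ?_, fun _ => h1.trans h2⟩
    rw [e1, e2, smul_single_one, smul_single_one,
      (AddMonoidAlgebra.single_mul_single _ _ _ _ :
        (AddMonoidAlgebra.single (r x - q i) c1 : PersRing κ) * AddMonoidAlgebra.single (p j - r x) c2
          = AddMonoidAlgebra.single _ _)]
    congr 1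
    rw [add_comm]
    exact tsub_add_tsub_cancel h2 h1
  choose c hc hne using key
  have hsum : (B * A) i j = AddMonoidAlgebra.single (p j - q i) (∑ x, c x) := by
    rw [Matrix.mul_apply, Finset.sum_congr rfl fun x _ => hc x]
    exact (map_sum (AddMonoidAlgebra.singleAddHom (p j - q i)) c _).symm
  by_cases hs : ∑ x, c x = 0
  · left; rw [hsum, hs]; simp
  · right
    obtain ⟨x, -, hx⟩ := Finset.exists_ne_zero_of_sum_ne_zero hs
    exact ⟨hne x hx, ∑ x, c x, hs, by rw [hsum, smul_single_one]⟩

lemma sum_delta_mul {R : Type*} [NonAssocSemiring R] (f : Fin m → R) (i : Fin m) :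
    ∑ x, (if i = x then (1:R) else 0) * f x = f i := by
  simp [ite_mul, Finset.sum_ite_eq]

lemma sum_mul_delta {R : Type*} [NonAssocSemiring R] (f : Fin m → R) (i : Fin m) :
    ∑ x, f x * (if x = i then (1:R) else 0) = f i := by
  simp [mul_ite, Finset.sum_ite_eq']

lemma single_mul_single_deg {b a c : ℝ≥0} (hab : a ≤ b) (hbc : b ≤ c) (x y : κ) :
    (AddMonoidAlgebra.single (b - a) x : PersRing κ) * AddMonoidAlgebra.single (c - b) y
      = AddMonoidAlgebra.single (c - a) (x * y) := by
  rw [show (AddMonoidAlgebra.single (b - a) x : PersRing κ) * AddMonoidAlgebra.single (c - b) y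
      = AddMonoidAlgebra.single ((b - a) + (c - b)) (x * y) from AddMonoidAlgebra.single_mul_single ..]
  congr 1
  rw [add_comm]
  exact tsub_add_tsub_cancel hbc hab

lemma cancel₁ {a b c : ℝ≥0} (hab : a ≤ b) (hbc : b ≤ c) (x y : κ) (hy : y ≠ 0) :
    x • (AddMonoidAlgebra.single (c - a) 1 : PersRing κ)
      + ((-(x * y⁻¹)) • AddMonoidAlgebra.single (b - a) 1)
        * (y • AddMonoidAlgebra.single (c - b) 1) = 0 := by
  rw [smul_single_one, smul_single_one, smul_single_one,
    single_mul_single_deg hab hbc, ← AddMonoidAlgebra.single_add]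
  have hs : x + -(x * y⁻¹) * y = 0 := by field_simp; ring
  rw [hs, AddMonoidAlgebra.single_zero]

lemma cancel₂ {a b c : ℝ≥0} (hab : a ≤ b) (hbc : b ≤ c) (x y : κ) (hy : y ≠ 0) :
    x • (AddMonoidAlgebra.single (c - a) 1 : PersRing κ)
      + (y • AddMonoidAlgebra.single (b - a) 1)
        * ((-(x * y⁻¹)) • AddMonoidAlgebra.single (c - b) 1) = 0 := by
  rw [smul_single_one, smul_single_one, smul_single_one,
    single_mul_single_deg hab hbc, ← AddMonoidAlgebra.single_add]
  have hs : x + y * -(x * y⁻¹) = 0 := by field_simp; ring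
  rw [hs, AddMonoidAlgebra.single_zero]

def Goal {κ : Type} [Field κ] {m n : ℕ} (q : Fin m → ℝ≥0) (p : Fin n → ℝ≥0)
    (A : Matrix (Fin m) (Fin n) (PersRing κ)) : Prop :=
  ∃ (B : Matrix (Fin m) (Fin m) (PersRing κ)) (C : Matrix (Fin n) (Fin n) (PersRing κ)),
    IsUnit B ∧ IsUnit C ∧ IsAdmissible q q B ∧ IsAdmissible p p C ∧
    (∀ i j₁ j₂, (B * A * C) i j₁ ≠ 0 → (B * A * C) i j₂ ≠ 0 → j₁ = j₂) ∧
    (∀ i₁ i₂ j, (B * A * C) i₁ j ≠ 0 → (B * A * C) i₂ j ≠ 0 → i₁ = i₂) ∧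
    (∀ i, (∀ j, A i j = 0) → ∀ a,
      (B i a = if i = a then 1 else 0) ∧ (B a i = if a = i then 1 else 0)) ∧
    (∀ j, (∀ i, A i j = 0) → ∀ a,
      (C j a = if j = a then 1 else 0) ∧ (C a j = if a = j then 1 else 0))

lemma goal_zero {q : Fin m → ℝ≥0} {p : Fin n → ℝ≥0}
    {A : Matrix (Fin m) (Fin n) (PersRing κ)} (hz : ∀ i j, A i j = 0) : Goal q p A := by
  have hA : A = 0 := Matrix.ext fun i j => hz i j
  refine ⟨1, 1, isUnit_one, isUnit_one, adm_one q, adm_one p, ?_, ?_, ?_, ?_⟩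
  · intro i j₁ j₂ h1 _; exact absurd (by simp [hA]) h1
  · intro i₁ i₂ j h1 _; exact absurd (by simp [hA]) h1
  · intro i _ a; exact ⟨Matrix.one_apply, Matrix.one_apply⟩
  · intro j _ a; exact ⟨Matrix.one_apply, Matrix.one_apply⟩

open scoped Classical in
lemma main_aux (q : Fin m → ℝ≥0) (p : Fin n → ℝ≥0) :
    ∀ (N : ℕ) (A : Matrix (Fin m) (Fin n) (PersRing κ)), IsAdmissible q p A →
      (Finset.univ.filter fun j => ∃ i, A i j ≠ 0).card ≤ N → Goal q p A := by
  classical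
  intro N
  induction N with
  | zero =>
    intro A hA hcard
    apply goal_zero
    intro i j
    by_contra hne
    have hmem : j ∈ Finset.univ.filter fun j => ∃ i, A i j ≠ 0 :=
      Finset.mem_filter.mpr ⟨Finset.mem_univ _, ⟨i, hne⟩⟩
    have := Finset.card_pos.mpr ⟨j, hmem⟩
    omega
  | succ N IH =>
    intro A hA hcard
    by_cases h0 : ∀ i j, A i j = 0
    · exact goal_zero h0
    push_neg at h0
    obtain ⟨iw, jw, hw⟩ := h0
    set Js := Finset.univ.filter (fun j => ∃ i, A i j ≠ 0) with hJs
    have hJsne : Js.Nonempty := ⟨jw, Finset.mem_filter.mpr ⟨Finset.mem_univ _, ⟨iw, hw⟩⟩⟩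
    obtain ⟨jm, hjm, hjmin⟩ := Js.exists_min_image p hJsne
    have hjm' : ∃ i, A i jm ≠ 0 := (Finset.mem_filter.mp hjm).2
    set Is := Finset.univ.filter (fun i => ∃ j, A i j ≠ 0 ∧ p j = p jm) with hIs
    have hIsne : Is.Nonempty := by
      obtain ⟨i, hi⟩ := hjm'
      exact ⟨i, Finset.mem_filter.mpr ⟨Finset.mem_univ _, ⟨jm, hi, rfl⟩⟩⟩
    obtain ⟨i0, hi0, hqmax⟩ := Is.exists_max_image q hIsne
    obtain ⟨j0, hj0ne, hj0p⟩ : ∃ j, A i0 j ≠ 0 ∧ p j = p jm := (Finset.mem_filter.mp hi0).2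
    have fmin : ∀ j i, A i j ≠ 0 → p j0 ≤ p j := by
      intro j i hij
      rw [hj0p]
      exact hjmin j (Finset.mem_filter.mpr ⟨Finset.mem_univ _, ⟨i, hij⟩⟩)
    have fmax : ∀ i, A i j0 ≠ 0 → q i ≤ q i0 := by
      intro i hi
      exact hqmax i (Finset.mem_filter.mpr ⟨Finset.mem_univ _, ⟨j0, hi, hj0p⟩⟩)
    obtain ⟨hq0p0, c0, hc0, e0⟩ := (hA i0 j0).resolve_left (by exact hj0ne)
    -- coefficients of column j0
    have hcoef : ∀ i, ∃ c : κ, (A i j0 ≠ 0 ∧ i ≠ i0) →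
        c ≠ 0 ∧ A i j0 = c • AddMonoidAlgebra.single (p j0 - q i) (1:κ) := by
      intro i
      by_cases h : A i j0 ≠ 0 ∧ i ≠ i0
      · rcases hA i j0 with hz | ⟨_, c, hc, e⟩
        · exact absurd hz h.1
        · exact ⟨c, fun _ => ⟨hc, e⟩⟩
      · exact ⟨1, fun hh => absurd hh h⟩
    choose cc hcc using hcoef
    set u : Fin m → PersRing κ := fun i =>
      if A i j0 ≠ 0 ∧ i ≠ i0 then
        (-(cc i * c0⁻¹)) • AddMonoidAlgebra.single (q i0 - q i) (1:κ) else 0 with hudef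
    have huP : ∀ i, A i j0 ≠ 0 ∧ i ≠ i0 →
        u i = (-(cc i * c0⁻¹)) • AddMonoidAlgebra.single (q i0 - q i) (1:κ) := by
      intro i h; rw [hudef]; simp only [if_pos h]
    have huN : ∀ i, ¬(A i j0 ≠ 0 ∧ i ≠ i0) → u i = 0 := by
      intro i h; rw [hudef]; simp only [if_neg h]
    have hu0 : u i0 = 0 := huN i0 (by simp)
    have hB1adm : IsAdmissible q q (rowOp i0 u) := by
      apply rowOp_adm q i0 u hu0
      intro i
      by_cases h : A i j0 ≠ 0 ∧ i ≠ i0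
      · right
        refine ⟨fmax i h.1, -(cc i * c0⁻¹), ?_, huP i h⟩
        have := (hcc i h).1
        simp [this, hc0]
      · left; exact huN i h
    set A₁ := rowOp i0 u * A with hA1def
    have hA₁ : ∀ i j, A₁ i j = A i j + u i * A i0 j := by
      intro i j; rw [hA1def, rowOp_mul]; rfl
    have hA₁adm : IsAdmissible q p A₁ := adm_mul hB1adm hA
    have k1 : ∀ j, A₁ i0 j = A i0 j := by
      intro j; rw [hA₁ i0 j, hu0, zero_mul, add_zero]
    have k2 : ∀ i, i ≠ i0 → A₁ i j0 = 0 := by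
      intro i hi
      rw [hA₁]
      by_cases hz : A i j0 = 0
      · rw [hz, huN i (by simp [hz]), zero_mul, add_zero]
      · obtain ⟨hci, ei⟩ := hcc i ⟨hz, hi⟩
        rw [ei, huP i ⟨hz, hi⟩, e0]
        exact cancel₁ (fmax i hz) hq0p0 (cc i) c0 hc0
    -- column stage
    have hcoef2 : ∀ j, ∃ c : κ, (A₁ i0 j ≠ 0 ∧ j ≠ j0) →
        c ≠ 0 ∧ A₁ i0 j = c • AddMonoidAlgebra.single (p j - q i0) (1:κ) := by
      intro j
      by_cases h : A₁ i0 j ≠ 0 ∧ j ≠ j0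
      · rcases hA₁adm i0 j with hz | ⟨_, c, hc, e⟩
        · exact absurd hz h.1
        · exact ⟨c, fun _ => ⟨hc, e⟩⟩
      · exact ⟨1, fun hh => absurd hh h⟩
    choose dd hdd using hcoef2
    have hpj : ∀ j, A₁ i0 j ≠ 0 → p j0 ≤ p j := by
      intro j hj
      rw [k1] at hj
      exact fmin j i0 hj
    set v : Fin n → PersRing κ := fun j =>
      if A₁ i0 j ≠ 0 ∧ j ≠ j0 then
        (-(dd j * c0⁻¹)) • AddMonoidAlgebra.single (p j - p j0) (1:κ) else 0 with hvdef
    have hvP : ∀ j, A₁ i0 j ≠ 0 ∧ j ≠ j0 →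
        v j = (-(dd j * c0⁻¹)) • AddMonoidAlgebra.single (p j - p j0) (1:κ) := by
      intro j h; rw [hvdef]; simp only [if_pos h]
    have hvN : ∀ j, ¬(A₁ i0 j ≠ 0 ∧ j ≠ j0) → v j = 0 := by
      intro j h; rw [hvdef]; simp only [if_neg h]
    have hv0 : v j0 = 0 := hvN j0 (by simp)
    have hC1adm : IsAdmissible p p (colOp j0 v) := by
      apply colOp_adm p j0 v hv0
      intro j
      by_cases h : A₁ i0 j ≠ 0 ∧ j ≠ j0
      · right
        refine ⟨hpj j h.1, -(dd j * c0⁻¹), ?_, hvP j h⟩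
        have := (hdd j h).1
        simp [this, hc0]
      · left; exact hvN j h
    set A₂ := A₁ * colOp j0 v with hA2def
    have hA₂ : ∀ i j, A₂ i j = A₁ i j + A₁ i j0 * v j := by
      intro i j; rw [hA2def, mul_colOp]; rfl
    have hA₂adm : IsAdmissible q p A₂ := adm_mul hA₁adm hC1adm
    have l1 : ∀ i, A₂ i j0 = A₁ i j0 := by
      intro i; rw [hA₂, hv0, mul_zero, add_zero]
    have l2 : ∀ j, j ≠ j0 → A₂ i0 j = 0 := by
      intro j hj
      rw [hA₂]
      by_cases hz : A₁ i0 j = 0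
      · rw [hz, hvN j (by simp [hz]), mul_zero, add_zero]
      · obtain ⟨hcj, ej⟩ := hdd j ⟨hz, hj⟩
        rw [ej, hvP j ⟨hz, hj⟩, k1, e0]
        exact cancel₂ hq0p0 (hpj j hz) (dd j) c0 hc0
    -- the reduced matrix
    set A₃ : Matrix (Fin m) (Fin n) (PersRing κ) :=
      Matrix.of fun i j => if i = i0 ∨ j = j0 then 0 else A₂ i j with hA3def
    have hA₃ : ∀ i j, A₃ i j = if i = i0 ∨ j = j0 then 0 else A₂ i j := fun i j => rfl
    have hA₃adm : IsAdmissible q p A₃ := by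
      intro i j
      rw [hA₃]
      by_cases h : i = i0 ∨ j = j0
      · left; rw [if_pos h]
      · rw [if_neg h]; exact hA₂adm i j
    have rowzero₃ : ∀ j, A₃ i0 j = 0 := fun j => by rw [hA₃, if_pos (Or.inl rfl)]
    have colzero₃ : ∀ i, A₃ i j0 = 0 := fun i => by rw [hA₃, if_pos (Or.inr rfl)]
    -- zero rows/columns of A stay zero
    have rowpres : ∀ i, (∀ j, A i j = 0) → (u i = 0 ∧ i ≠ i0 ∧ ∀ j, A₂ i j = 0) := by
      intro i hz
      have hii0 : i ≠ i0 := fun h => hj0ne (by rw [← h]; exact hz j0)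
      have huz : u i = 0 := huN i (by simp [hz j0])
      refine ⟨huz, hii0, fun j => ?_⟩
      rw [hA₂, hA₁, hz, huz, zero_mul, add_zero, zero_add, hA₁, hz, huz, zero_mul, add_zero,
        zero_mul]
    have colpres : ∀ j, (∀ i, A i j = 0) → (v j = 0 ∧ j ≠ j0 ∧ ∀ i, A₂ i j = 0) := by
      intro j hz
      have hjj0 : j ≠ j0 := fun h => hj0ne (by rw [← h]; exact hz i0)
      have hA₁z : ∀ i, A₁ i j = 0 := by
        intro i; rw [hA₁, hz, hz, mul_zero, add_zero]
      have hvz : v j = 0 := hvN j (by simp [hA₁z i0])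
      refine ⟨hvz, hjj0, fun i => ?_⟩
      rw [hA₂, hA₁z, hvz, mul_zero, add_zero]
    -- cardinality decreases
    have hj0Js : j0 ∈ Js := Finset.mem_filter.mpr ⟨Finset.mem_univ _, ⟨i0, hj0ne⟩⟩
    have hsub : (Finset.univ.filter fun j => ∃ i, A₃ i j ≠ 0) ⊆ Js.erase j0 := by
      intro j hj
      obtain ⟨-, i, hij⟩ := Finset.mem_filter.mp hj
      have hcond : ¬(i = i0 ∨ j = j0) := by
        intro h
        exact hij (by rw [hA₃, if_pos h])
      push_neg at hcond
      have hA₂ne : A₂ i j ≠ 0 := by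
        intro h
        exact hij (by rw [hA₃, if_neg (by push_neg; exact hcond), h])
      refine Finset.mem_erase.mpr ⟨hcond.2, Finset.mem_filter.mpr ⟨Finset.mem_univ _, ?_⟩⟩
      by_contra hall
      push_neg at hall
      exact hA₂ne ((colpres j hall).2.2 i)
    have hcard₃ : (Finset.univ.filter fun j => ∃ i, A₃ i j ≠ 0).card ≤ N := by
      have h1 := Finset.card_le_card hsub
      have h2 := Finset.card_erase_of_mem hj0Js
      have h3 := Finset.card_pos.mpr ⟨j0, hj0Js⟩
      omega
    obtain ⟨B', C', hB'u, hC'u, hB'a, hC'a, hrow', hcol', hBs, hCs⟩ := IH A₃ hA₃adm hcard₃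
    have hB'i0 := hBs i0 rowzero₃
    have hC'j0 := hCs j0 colzero₃
    -- the error matrix
    set E : Matrix (Fin m) (Fin n) (PersRing κ) :=
      Matrix.of fun i j => if i = i0 then (if j = j0 then A i0 j0 else 0) else 0 with hEdef
    have hEapp : ∀ i j, E i j = if i = i0 then (if j = j0 then A i0 j0 else 0) else 0 :=
      fun i j => rfl
    have hsplit : A₂ = A₃ + E := by
      refine Matrix.ext fun i j => ?_
      rw [Matrix.add_apply, hA₃, hEapp]
      by_cases hi : i = i0
      · by_cases hj : j = j0
        · rw [if_pos (Or.inl hi), if_pos hi, if_pos hj, zero_add, hi, hj, l1 i0, k1 j0]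
        · rw [if_pos (Or.inl hi), if_pos hi, if_neg hj, zero_add, hi]
          exact l2 j hj
      · by_cases hj : j = j0
        · rw [if_pos (Or.inr hj), if_neg hi, add_zero, hj, l1 i]
          exact k2 i hi
        · rw [if_neg (not_or.mpr ⟨hi, hj⟩), if_neg hi, add_zero]
    have hBE : B' * E = E := by
      refine Matrix.ext fun i j => ?_
      rw [Matrix.mul_apply]
      by_cases hj : j = j0
      · simp [hEapp, hj, mul_ite, mul_zero, Finset.sum_ite_eq', (hB'i0 i).2, ite_mul,
          one_mul, zero_mul]
      · simp [hEapp, hj]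
    have hEC : E * C' = E := by
      refine Matrix.ext fun i j => ?_
      rw [Matrix.mul_apply]
      by_cases hi : i = i0
      · by_cases hj : j = j0
        · simp [hEapp, hi, hj, ite_mul, zero_mul, Finset.sum_ite_eq', (hC'j0 j).1, (hC'j0 j0).1]
        · have hj' : ¬ j0 = j := fun h => hj h.symm
          simp [hEapp, hi, hj, hj', ite_mul, zero_mul, Finset.sum_ite_eq', (hC'j0 j).1]
      · simp [hEapp, hi]
    have hexpr : B' * rowOp i0 u * A * (colOp j0 v * C') = B' * A₃ * C' + E := by
      have h1 : B' * rowOp i0 u * A * (colOp j0 v * C') = B' * (A₂ * C') := by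
        rw [hA2def, hA1def]
        simp only [Matrix.mul_assoc]
      rw [h1, hsplit, Matrix.add_mul, Matrix.mul_add, hEC, hBE]
      simp only [Matrix.mul_assoc]
    have hM'row : ∀ j, (B' * A₃ * C') i0 j = 0 := by
      intro j
      rw [Matrix.mul_assoc, Matrix.mul_apply,
        Finset.sum_congr rfl fun a _ => by rw [(hB'i0 a).1], sum_delta_mul, Matrix.mul_apply,
        Finset.sum_congr rfl fun l _ => by rw [rowzero₃ l, zero_mul]]
      exact Finset.sum_const_zero
    have hM'col : ∀ i, (B' * A₃ * C') i j0 = 0 := by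
      intro i
      rw [Matrix.mul_apply,
        Finset.sum_congr rfl fun l _ => by rw [(hC'j0 l).2], sum_mul_delta, Matrix.mul_apply,
        Finset.sum_congr rfl fun a _ => by rw [colzero₃ a, mul_zero]]
      exact Finset.sum_const_zero
    have hF : ∀ i j, (B' * rowOp i0 u * A * (colOp j0 v * C')) i j
        = (B' * A₃ * C') i j + (if i = i0 then (if j = j0 then A i0 j0 else 0) else 0) := by
      intro i j
      rw [hexpr, Matrix.add_apply, hEapp]
    refine ⟨B' * rowOp i0 u, colOp j0 v * C', hB'u.mul (rowOp_isUnit i0 u hu0),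
      (colOp_isUnit j0 v hv0).mul hC'u, adm_mul hB'a hB1adm, adm_mul hC1adm hC'a,
      ?_, ?_, ?_, ?_⟩
    · -- at most one nonzero entry per row
      intro i j₁ j₂ h1 h2
      by_cases hi : i = i0
      · have hz : ∀ j', (B' * A₃ * C') i j' = 0 := fun j' => by rw [hi]; exact hM'row j'
        rw [hF, hz, zero_add, if_pos hi] at h1 h2
        by_cases hj1 : j₁ = j0
        · by_cases hj2 : j₂ = j0
          · rw [hj1, hj2]
          · rw [if_neg hj2] at h2; exact absurd rfl h2
        · rw [if_neg hj1] at h1; exact absurd rfl h1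
      · rw [hF, if_neg hi, add_zero] at h1 h2
        exact hrow' i j₁ j₂ h1 h2
    · -- at most one nonzero entry per column
      intro i₁ i₂ j h1 h2
      by_cases hj : j = j0
      · have hz : ∀ i', (B' * A₃ * C') i' j = 0 := fun i' => by rw [hj]; exact hM'col i'
        rw [hF, hz, zero_add] at h1 h2
        by_cases hi1 : i₁ = i0
        · by_cases hi2 : i₂ = i0
          · rw [hi1, hi2]
          · rw [if_neg hi2] at h2; exact absurd rfl h2
        · rw [if_neg hi1] at h1; exact absurd rfl h1
      · have hzero : ∀ i', (if i' = i0 then (if j = j0 then A i0 j0 else 0) else 0) = 0 :=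
          fun i' => by simp [hj]
        rw [hF, hzero, add_zero] at h1 h2
        exact hcol' i₁ i₂ j h1 h2
    · -- B fixes zero rows of A
      intro i hz a
      obtain ⟨huz, hii0, hA₂z⟩ := rowpres i hz
      have hA₃z : ∀ j, A₃ i j = 0 := by
        intro j
        rw [hA₃]
        by_cases h : i = i0 ∨ j = j0
        · rw [if_pos h]
        · rw [if_neg h]; exact hA₂z j
      have hBs' := hBs i hA₃z
      have hB₁row : ∀ a, rowOp i0 u i a = if i = a then 1 else 0 := by
        intro a
        simp only [rowOp, Matrix.of_apply, huz, ite_self, add_zero]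
      have hB₁col : ∀ a, rowOp i0 u a i = if a = i then 1 else 0 := by
        intro a
        simp only [rowOp, Matrix.of_apply, if_neg hii0, add_zero]
      constructor
      · rw [Matrix.mul_apply, Finset.sum_congr rfl fun x _ => by rw [(hBs' x).1],
          sum_delta_mul]
        exact hB₁row a
      · rw [Matrix.mul_apply, Finset.sum_congr rfl fun x _ => by rw [hB₁col x],
          sum_mul_delta]
        exact (hBs' a).2
    · -- C fixes zero columns of A
      intro j hz a
      obtain ⟨hvz, hjj0, hA₂z⟩ := colpres j hz
      have hA₃z : ∀ i, A₃ i j = 0 := by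
        intro i
        rw [hA₃]
        by_cases h : i = i0 ∨ j = j0
        · rw [if_pos h]
        · rw [if_neg h]; exact hA₂z i
      have hCs' := hCs j hA₃z
      have hC₁row : ∀ a, colOp j0 v j a = if j = a then 1 else 0 := by
        intro a
        simp only [colOp, Matrix.of_apply, if_neg hjj0, add_zero]
      have hC₁col : ∀ a, colOp j0 v a j = if a = j then 1 else 0 := by
        intro a
        simp only [colOp, Matrix.of_apply, hvz, ite_self, add_zero]
      constructor
      · rw [Matrix.mul_apply, Finset.sum_congr rfl fun x _ => by rw [hC₁row x],
          sum_delta_mul]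
        exact (hCs' a).1
      · rw [Matrix.mul_apply, Finset.sum_congr rfl fun x _ => by rw [(hCs' x).2],
          sum_mul_delta]
        exact hC₁col a

end NormalFormAux

/-- **Lemma 2.5 (normal form of a graded homomorphism).**  Any `(q, p)`-admissible matrix
over `κ[ℝ₊]` can be brought, by an invertible `(q, q)`-admissible row operation matrix `B`
and an invertible `(p, p)`-admissible column operation matrix `C`, to a matrix `B * A * C`
having at most one nonzero entry in each row and in each column. -/
theorem admissible_matrix_normal_form (κ : Type) [Field κ] {m n : ℕ}
    (p : Fin n → ℝ≥0) (q : Fin m → ℝ≥0)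
    (A : Matrix (Fin m) (Fin n) (PersRing κ)) (hA : IsAdmissible q p A) :
    ∃ (B : Matrix (Fin m) (Fin m) (PersRing κ)) (C : Matrix (Fin n) (Fin n) (PersRing κ)),
      IsUnit B ∧ IsUnit C ∧ IsAdmissible q q B ∧ IsAdmissible p p C ∧
      (∀ i j₁ j₂, (B * A * C) i j₁ ≠ 0 → (B * A * C) i j₂ ≠ 0 → j₁ = j₂) ∧
      (∀ i₁ i₂ j, (B * A * C) i₁ j ≠ 0 → (B * A * C) i₂ j ≠ 0 → i₁ = i₂) := by
  classical
  obtain ⟨B, C, h1, h2, h3, h4, h5, h6, -, -⟩ :=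
    NormalFormAux.main_aux q p n A hA
      (le_trans (Finset.card_filter_le _ _) (by simp))
  exact ⟨B, C, h1, h2, h3, h4, h5, h6⟩

end
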